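/- With the setup of the directed super-amalgamation system for a monadic ortholattice A: for every a ∈ A, b ∈ A_m, if d_n ∘ g_n(a) ≤ d_m(b) for all n ∈ ω, then d_n ∘ g_n(∃a) ≤ d_m(b) for all n ∈ ω. -/
import Mathlib


structure IsOrtho {A : Type*} [Lattice A] [BoundedOrder A] (c : A → A) : Prop where
  inf_compl : ∀ a : A, a ⊓ c a = ⊥
  sup_compl : ∀ a : A, a ⊔ c a = ⊤
  anti : ∀ a b : A, a ≤ b → c b ≤ c a
  invol : ∀ a : A, c (c a) = a

structure IsQuant {A : Type*} [Lattice A] [BoundedOrder A] (c : A → A) (E : A → A) : Prop where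
  sup : ∀ a b : A, E (a ⊔ b) = E a ⊔ E b
  bot : E ⊥ = ⊥
  idem : ∀ a : A, E (E a) = E a
  le : ∀ a : A, a ≤ E a
  closed_compl : ∀ a : A, E (c (E a)) = c (E a)

structure IsOLEmb {A B : Type*} [Lattice A] [BoundedOrder A] [Lattice B] [BoundedOrder B]
    (cA : A → A) (cB : B → B) (φ : A → B) : Prop where
  inf : ∀ a b : A, φ (a ⊓ b) = φ a ⊓ φ b
  sup : ∀ a b : A, φ (a ⊔ b) = φ a ⊔ φ b
  compl : ∀ a : A, φ (cA a) = cB (φ a)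
  bot : φ ⊥ = ⊥
  top : φ ⊤ = ⊤
  inj : Function.Injective φ

lemma IsOLEmb.le_iff {A B : Type*} [Lattice A] [BoundedOrder A] [Lattice B] [BoundedOrder B]
    {cA : A → A} {cB : B → B} {φ : A → B} (h : IsOLEmb cA cB φ) {a b : A} :
    φ a ≤ φ b ↔ a ≤ b := by
  constructor
  · intro hle
    have : φ (a ⊓ b) = φ a := by rw [h.inf]; exact inf_eq_left.mpr hle
    exact inf_eq_left.mp (h.inj this)
  · intro hle
    have : φ a ⊓ φ b = φ a := by rw [← h.inf, inf_eq_left.mpr hle]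
    exact inf_eq_left.mp this

theorem direct_limit_upper_bound_exists {A C : Type*} [Lattice A] [BoundedOrder A] [Lattice C] [BoundedOrder C]
    (cA : A → A) (E : A → A) (hO : IsOrtho cA) (hQ : IsQuant cA E)
    (An : ℕ → Type*) [∀ n, Lattice (An n)] [∀ n, BoundedOrder (An n)]
    (cAn : ∀ n, An n → An n) (hOn : ∀ n, IsOrtho (cAn n))
    (cC : C → C) (hOC : IsOrtho cC)
    (g : ∀ n, A → An n) (h : ∀ n, A → An n)
    (f : ∀ n, An n → An (n + 1)) (d : ∀ n, An n → C)
    (hg : ∀ n, IsOLEmb cA (cAn n) (g n))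
    (hf : ∀ n, IsOLEmb (cAn n) (cAn (n + 1)) (f n))
    (hd : ∀ n, IsOLEmb (cAn n) cC (d n))
    (hhg : ∀ n a, a = E a → h n a = g n a)
    (hgf : ∀ n a, a = E a → g (n + 1) a = f n (h n a))
    (hdf : ∀ n x, d n x = d (n + 1) (f n x))
    (hinterp : ∀ (m : ℕ) (a : A) (b : An m), g (m + 1) a ≤ f m b →
      ∃ cc : A, cc = E cc ∧ g (m + 1) a ≤ g (m + 1) cc ∧
        g (m + 1) cc = f m (h m cc) ∧ f m (h m cc) ≤ f m b) :
    ∀ (a : A) (m : ℕ) (b : An m),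
      (∀ n : ℕ, d n (g n a) ≤ d m b) → ∀ n : ℕ, d n (g n (E a)) ≤ d m b := by
  intro a m b hle n
  have h1 : g (m + 1) a ≤ f m b := by
    have h2 := hle (m + 1)
    rw [hdf m b] at h2
    exact (hd (m + 1)).le_iff.mp h2
  obtain ⟨cc, hcl, hac, heq, hfb⟩ := hinterp m a b h1
  have hacc : a ≤ cc := (hg (m + 1)).le_iff.mp hac
  have hEa : E a ≤ cc := by
    have hs := hQ.sup a cc
    rw [sup_eq_right.mpr hacc] at hs
    calc E a ≤ E a ⊔ E cc := le_sup_left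
    _ = E cc := hs.symm
    _ = cc := hcl.symm
  have hconst : ∀ k, d k (g k cc) = d 0 (g 0 cc) := by
    intro k
    induction k with
    | zero => rfl
    | succ j ih =>
      rw [hgf j cc hcl, hhg j cc hcl, ← hdf j (g j cc)]
      exact ih
  have hub : d 0 (g 0 cc) ≤ d m b := by
    have h3 : d (m + 1) (g (m + 1) cc) ≤ d (m + 1) (f m b) :=
      (hd (m + 1)).le_iff.mpr (heq ▸ hfb)
    rw [← hdf m b, hconst (m + 1)] at h3
    exact h3
  calc d n (g n (E a)) ≤ d n (g n cc) :=
        (hd n).le_iff.mpr ((hg n).le_iff.mpr hEa)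
  _ = d 0 (g 0 cc) := hconst n
  _ ≤ d m b := hub
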